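/- Let g be a convex geometry on a finite set I and let L_g be its lattice of convex sets. Let M be a set of convex sets each of which is rank-modular, i.e., for every m ∈ M and every convex set x one has |m ∩ x| + |m ∨ x| = |m| + |x|. Let D be a collection of convex sets closed under pairwise unions and intersections (in particular, the union of any two members of D is convex). Then any two elements x, y of the sublattice of L_g generated by M ∪ D satisfy x ∨ y = x ∪ y; in particular, the sublattice of L_g generated by M ∪ D is distributive. -/

import Mathlib

/-- A (loopless) convex geometry on a finite ground set `I`: a closure operator
on subsets of `I` satisfying looplessness and the anti-exchange axiom. -/
structure ConvexGeometry (I : Type*) [DecidableEq I] [Fintype I] where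
  cl : Finset I → Finset I
  subset_cl : ∀ A, A ⊆ cl A
  mono : ∀ ⦃A B : Finset I⦄, A ⊆ B → cl A ⊆ cl B
  idem : ∀ A, cl (cl A) = cl A
  loopless : cl ∅ = ∅
  antiExchange : ∀ (A : Finset I) (a b : I), a ≠ b → a ∉ cl A → b ∉ cl A →
    a ∈ cl (insert b A) → b ∉ cl (insert a A)

variable {I : Type*} [DecidableEq I] [Fintype I]

/-- The set of extreme points of `K`: `Ex(K) = {a ∈ K : a ∉ g(K \ {a})}`. -/
def ConvexGeometry.Ex (g : ConvexGeometry I) (K : Finset I) : Finset I :=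
  K.filter fun a => a ∉ g.cl (K.erase a)

/-- The sublattice of the lattice of convex sets of `g` generated by a family
`X` of convex sets: the smallest collection containing `X` and closed under
meet `A ∧ B = A ∩ B` and join `A ∨ B = g(A ∪ B)`. -/
inductive GenSublattice (g : ConvexGeometry I) (X : Set (Finset I)) : Finset I → Prop
  | base {A : Finset I} : A ∈ X → GenSublattice g X A
  | inf {A B : Finset I} : GenSublattice g X A → GenSublattice g X B →
      GenSublattice g X (A ∩ B)
  | sup {A B : Finset I} : GenSublattice g X A → GenSublattice g X B →
      GenSublattice g X (g.cl (A ∪ B))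

namespace ConvexGeometry

lemma cl_univ (g : ConvexGeometry I) : g.cl Finset.univ = Finset.univ :=
  Finset.Subset.antisymm (Finset.subset_univ _) (g.subset_cl _)

lemma cl_inter {g : ConvexGeometry I} {A B : Finset I} (hA : g.cl A = A) (hB : g.cl B = B) :
    g.cl (A ∩ B) = A ∩ B := by
  apply Finset.Subset.antisymm _ (g.subset_cl _)
  apply Finset.subset_inter
  · calc g.cl (A ∩ B) ⊆ g.cl A := g.mono Finset.inter_subset_left
      _ = A := hA
  · calc g.cl (A ∩ B) ⊆ g.cl B := g.mono Finset.inter_subset_right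
      _ = B := hB

/-- union-friendly convex set. -/
def UF (g : ConvexGeometry I) (m : Finset I) : Prop :=
  g.cl m = m ∧ ∀ x, g.cl x = x → g.cl (m ∪ x) = m ∪ x

lemma UF.univ (g : ConvexGeometry I) : g.UF Finset.univ :=
  ⟨g.cl_univ, fun x _ => by
    rw [Finset.union_eq_left.mpr (Finset.subset_univ x)]; exact g.cl_univ⟩

lemma UF.inter {g : ConvexGeometry I} {m m' : Finset I} (h : g.UF m) (h' : g.UF m') :
    g.UF (m ∩ m') := by
  refine ⟨cl_inter h.1 h'.1, fun x hx => ?_⟩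
  apply Finset.Subset.antisymm _ (g.subset_cl _)
  have h1 : g.cl ((m ∩ m') ∪ x) ⊆ m ∪ x := by
    rw [← h.2 x hx]; exact g.mono (Finset.union_subset_union_left Finset.inter_subset_left)
  have h2 : g.cl ((m ∩ m') ∪ x) ⊆ m' ∪ x := by
    rw [← h'.2 x hx]; exact g.mono (Finset.union_subset_union_left Finset.inter_subset_right)
  intro a ha
  have := h1 ha; have := h2 ha
  simp only [Finset.mem_union, Finset.mem_inter] at *
  tauto

/-- Key lemma: `(m ∩ x) ∪ y` is convex when `m` is union-friendly,
`x, y` convex and `x ∪ y` convex. -/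
lemma key {g : ConvexGeometry I} {m x y : Finset I} (hm : g.UF m)
    (hy : g.cl y = y) (hxy : g.cl (x ∪ y) = x ∪ y) :
    g.cl ((m ∩ x) ∪ y) = (m ∩ x) ∪ y := by
  apply Finset.Subset.antisymm _ (g.subset_cl _)
  have h1 : g.cl ((m ∩ x) ∪ y) ⊆ m ∪ y := by
    rw [← hm.2 y hy]; exact g.mono (Finset.union_subset_union_left Finset.inter_subset_left)
  have h2 : g.cl ((m ∩ x) ∪ y) ⊆ x ∪ y := by
    rw [← hxy]; exact g.mono (Finset.union_subset_union_left Finset.inter_subset_right)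
  intro a ha
  have := h1 ha; have := h2 ha
  simp only [Finset.mem_union, Finset.mem_inter] at *
  tauto

/-- `D` together with `∅` and `univ`. -/
def DD (D : Set (Finset I)) (d : Finset I) : Prop :=
  d ∈ D ∨ d = ∅ ∨ d = Finset.univ

section
variable {g : ConvexGeometry I} {D : Set (Finset I)}

lemma DD_empty : DD D (∅ : Finset I) := Or.inr (Or.inl rfl)
lemma DD_univ : DD D (Finset.univ : Finset I) := Or.inr (Or.inr rfl)

lemma DD_convex (hD : ∀ d ∈ D, g.cl d = d) {d : Finset I} (h : DD D d) : g.cl d = d := by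
  rcases h with h | rfl | rfl
  · exact hD d h
  · exact g.loopless
  · exact g.cl_univ

lemma DD_union (hDcl : ∀ d ∈ D, ∀ d' ∈ D, d ∪ d' ∈ D ∧ d ∩ d' ∈ D)
    {d e : Finset I} (hd : DD D d) (he : DD D e) : DD D (d ∪ e) := by
  rcases hd with hd | rfl | rfl
  · rcases he with he | rfl | rfl
    · exact Or.inl (hDcl d hd e he).1
    · rw [Finset.union_empty]; exact Or.inl hd
    · simp [DD]
  · simpa using he
  · simp [DD]

lemma DD_inter (hDcl : ∀ d ∈ D, ∀ d' ∈ D, d ∪ d' ∈ D ∧ d ∩ d' ∈ D)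
    {d e : Finset I} (hd : DD D d) (he : DD D e) : DD D (d ∩ e) := by
  rcases hd with hd | rfl | rfl
  · rcases he with he | rfl | rfl
    · exact Or.inl (hDcl d hd e he).2
    · simp [DD]
    · rw [Finset.inter_univ]; exact Or.inl hd
  · simp [DD]
  · simpa using he

end

/-- The class of sets of the form `(m₁∩d₁) ∪ ⋯ ∪ (mₖ∩dₖ) ∪ d`. -/
inductive Good (g : ConvexGeometry I) (D : Set (Finset I)) : Finset I → Prop
  | base {d : Finset I} : DD D d → Good g D d
  | step {m d y : Finset I} : g.UF m → DD D d → Good g D y → Good g D ((m ∩ d) ∪ y)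

section
variable {g : ConvexGeometry I} {D : Set (Finset I)}
variable (hD : ∀ d ∈ D, g.cl d = d)
variable (hDcl : ∀ d ∈ D, ∀ d' ∈ D, d ∪ d' ∈ D ∧ d ∩ d' ∈ D)
include hD hDcl

lemma good_cl_union {x : Finset I} (hx : Good g D x) :
    ∀ d : Finset I, DD D d → g.cl (d ∪ x) = d ∪ x := by
  induction hx with
  | @base e he =>
    intro d hd
    exact DD_convex hD (DD_union hDcl hd he)
  | @step m e y hm he hy ih =>
    intro d hd
    have h1 : d ∪ ((m ∩ e) ∪ y) = (m ∩ e) ∪ (d ∪ y) := by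
      ext a; simp only [Finset.mem_union, Finset.mem_inter]; tauto
    rw [h1]
    have hxy : g.cl (e ∪ (d ∪ y)) = e ∪ (d ∪ y) := by
      have h2 : e ∪ (d ∪ y) = (e ∪ d) ∪ y := by
        ext a; simp only [Finset.mem_union]; tauto
      rw [h2]; exact ih (e ∪ d) (DD_union hDcl he hd)
    exact key hm (ih d hd) hxy

lemma good_cl {x : Finset I} (hx : Good g D x) : g.cl x = x := by
  have := good_cl_union hD hDcl hx ∅ DD_empty
  simpa using this

lemma good_union {x y : Finset I} (hx : Good g D x) (hy : Good g D y) :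
    Good g D (x ∪ y) := by
  induction hx with
  | @base d hd =>
    have h : d ∪ y = (Finset.univ ∩ d) ∪ y := by simp
    rw [h]; exact Good.step (UF.univ g) hd hy
  | @step m e x' hm he hx' ih =>
    have h : ((m ∩ e) ∪ x') ∪ y = (m ∩ e) ∪ (x' ∪ y) := Finset.union_assoc _ _ _
    rw [h]; exact Good.step hm he ih

lemma good_inter_aux {m e y : Finset I} (hm : g.UF m) (he : DD D e) (hy : Good g D y) :
    Good g D ((m ∩ e) ∩ y) := by
  induction hy with
  | @base d hd =>
    have h : (m ∩ e) ∩ d = (m ∩ (e ∩ d)) ∪ ∅ := by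
      ext a; simp only [Finset.mem_inter, Finset.mem_union, Finset.notMem_empty]; tauto
    rw [h]; exact Good.step hm (DD_inter hDcl he hd) (Good.base DD_empty)
  | @step n f y' hn hf hy' ih =>
    have h : (m ∩ e) ∩ ((n ∩ f) ∪ y') = ((m ∩ n) ∩ (e ∩ f)) ∪ ((m ∩ e) ∩ y') := by
      ext a; simp only [Finset.mem_inter, Finset.mem_union]; tauto
    rw [h]; exact Good.step (hm.inter hn) (DD_inter hDcl he hf) ih

lemma good_inter {x y : Finset I} (hx : Good g D x) (hy : Good g D y) :
    Good g D (x ∩ y) := by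
  induction hx with
  | @base d hd =>
    have h : d ∩ y = (Finset.univ ∩ d) ∩ y := by simp
    rw [h]; exact good_inter_aux hD hDcl (UF.univ g) hd hy
  | @step m e x' hm he hx' ih =>
    have h : ((m ∩ e) ∪ x') ∩ y = ((m ∩ e) ∩ y) ∪ (x' ∩ y) := by
      ext a; simp only [Finset.mem_inter, Finset.mem_union]; tauto
    rw [h]
    exact good_union hD hDcl (good_inter_aux hD hDcl hm he hy) ih

end

end ConvexGeometry

open ConvexGeometry in
/-- if `M` is a set of rank-modular convex sets and `D` a
collection of convex sets closed under pairwise unions and intersections,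
then any two elements `x, y` of the sublattice generated by `M ∪ D` satisfy
`x ∨ y = x ∪ y`; in particular this sublattice is distributive. -/
theorem stmt_15 (g : ConvexGeometry I) (M D : Set (Finset I))
    (hM : ∀ m ∈ M, g.cl m = m)
    (hMmod : ∀ m ∈ M, ∀ x : Finset I, g.cl x = x →
      (m ∩ x).card + (g.cl (m ∪ x)).card = m.card + x.card)
    (hD : ∀ d ∈ D, g.cl d = d)
    (hDcl : ∀ d ∈ D, ∀ d' ∈ D, d ∪ d' ∈ D ∧ d ∩ d' ∈ D) :
    (∀ x y : Finset I, GenSublattice g (M ∪ D) x → GenSublattice g (M ∪ D) y →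
        g.cl (x ∪ y) = x ∪ y) ∧
      (∀ x y z : Finset I, GenSublattice g (M ∪ D) x →
        GenSublattice g (M ∪ D) y → GenSublattice g (M ∪ D) z →
          x ∩ g.cl (y ∪ z) = g.cl ((x ∩ y) ∪ (x ∩ z))) := by
  -- every element of M is union-friendly
  have hUF : ∀ m ∈ M, g.UF m := by
    intro m hm
    refine ⟨hM m hm, fun x hx => ?_⟩
    have h1 := hMmod m hm x hx
    have h2 : (m ∩ x).card + (m ∪ x).card = m.card + x.card :=
      Finset.card_inter_add_card_union m x
    have h3 : (g.cl (m ∪ x)).card ≤ (m ∪ x).card := by omega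
    exact (Finset.eq_of_subset_of_card_le (g.subset_cl _) h3).symm
  -- every element of the sublattice is Good
  have hgood : ∀ x : Finset I, GenSublattice g (M ∪ D) x → Good g D x := by
    intro x hx
    induction hx with
    | @base A hA =>
      rcases hA with hA | hA
      · have h : A = (A ∩ Finset.univ) ∪ ∅ := by simp
        rw [h]; exact Good.step (hUF A hA) DD_univ (Good.base DD_empty)
      · exact Good.base (Or.inl hA)
    | @inf A B hA hB ihA ihB => exact good_inter hD hDcl ihA ihB
    | @sup A B hA hB ihA ihB =>
      have h := good_union hD hDcl ihA ihB
      rw [good_cl hD hDcl h]; exact h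
  constructor
  · intro x y hx hy
    exact good_cl hD hDcl (good_union hD hDcl (hgood x hx) (hgood y hy))
  · intro x y z hx hy hz
    have hgx := hgood x hx; have hgy := hgood y hy; have hgz := hgood z hz
    rw [good_cl hD hDcl (good_union hD hDcl hgy hgz)]
    have h : x ∩ (y ∪ z) = (x ∩ y) ∪ (x ∩ z) := by
      ext a; simp only [Finset.mem_inter, Finset.mem_union]; tauto
    rw [h, good_cl hD hDcl (good_union hD hDcl (good_inter hD hDcl hgx hgy) (good_inter hD hDcl hgx hgz))]
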